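/- For every Δt₀ ∈ (0,1], all t ∈ [0,Δt₀] and all z ∈ ℝ, one has the one-sided derivative bound Ψ_t′(z) ≤ e^{Δt₀}. -/

import Mathlib

noncomputable section

/-- The flow map `Φ_t(z) = z / √(z² + (1 - z²) e^{-2t})` of the ODE `ż = z - z³`. -/
def Phi (t z : ℝ) : ℝ := z / Real.sqrt (z ^ 2 + (1 - z ^ 2) * Real.exp (-2 * t))

/-- `Ψ_t(z) = (Φ_t(z) - z)/t` for `t > 0`, and `Ψ_0(z) = z - z³`. -/
def Psi (t z : ℝ) : ℝ := if t = 0 then z - z ^ 3 else (Phi t z - z) / t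

/-- For every `Δt₀ ∈ (0,1]`, all `t ∈ [0, Δt₀]` and all `z ∈ ℝ`,
the one-sided derivative bound `Ψ_t′(z) ≤ e^{Δt₀}` holds. -/
theorem psi_deriv_one_sided_bound (Δt₀ : ℝ) (hΔt₀ : Δt₀ ∈ Set.Ioc (0 : ℝ) 1)
    (t : ℝ) (ht : t ∈ Set.Icc 0 Δt₀) (z : ℝ) :
    deriv (Psi t) z ≤ Real.exp Δt₀ := by
  obtain ⟨hΔ0, hΔ1⟩ := hΔt₀
  obtain ⟨ht0, htΔ⟩ := ht
  rcases eq_or_lt_of_le ht0 with h0 | h0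
  · -- t = 0
    have hP : Psi t = fun z : ℝ => z - z ^ 3 := by
      funext w; simp [Psi, ← h0]
    rw [hP]
    have hd : HasDerivAt (fun z : ℝ => z - z ^ 3) (1 - 3 * z ^ 2) z := by
      have := (hasDerivAt_id z).sub (hasDerivAt_pow 3 z)
      exact this.congr_deriv (by norm_num)
    rw [hd.deriv]
    have h1 : (1 : ℝ) ≤ Real.exp Δt₀ := Real.one_le_exp hΔ0.le
    nlinarith [sq_nonneg z]
  · -- t > 0
    set a := Real.exp (-2 * t) with ha
    have ha0 : 0 < a := Real.exp_pos _
    have ha1 : a ≤ 1 := Real.exp_le_one_iff.mpr (by linarith)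
    set D := z ^ 2 + (1 - z ^ 2) * a with hDdef
    have hDa : D = a + z ^ 2 * (1 - a) := by rw [hDdef]; ring
    have hDpos : 0 < D := by nlinarith [sq_nonneg z]
    have hDge : a ≤ D := by nlinarith [sq_nonneg z]
    set s := Real.sqrt D with hs
    have hspos : 0 < s := Real.sqrt_pos.mpr hDpos
    have hs2 : s ^ 2 = D := Real.sq_sqrt hDpos.le
    -- derivative of D
    have hD : HasDerivAt (fun w : ℝ => w ^ 2 + (1 - w ^ 2) * a) (2 * z * (1 - a)) z := by
      have := (hasDerivAt_pow 2 z).add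
        (((hasDerivAt_const z (1 : ℝ)).sub (hasDerivAt_pow 2 z)).mul_const a)
      exact this.congr_deriv (by norm_num <;> ring)
    have hsq : HasDerivAt (fun w : ℝ => Real.sqrt (w ^ 2 + (1 - w ^ 2) * a))
        (1 / (2 * s) * (2 * z * (1 - a))) z := by
      exact (Real.hasDerivAt_sqrt hDpos.ne').comp z hD
    have hPhi : HasDerivAt (Phi t)
        ((1 * s - z * (1 / (2 * s) * (2 * z * (1 - a)))) / s ^ 2) z := by
      exact (hasDerivAt_id z).div hsq hspos.ne'
    have hval : (1 * s - z * (1 / (2 * s) * (2 * z * (1 - a)))) / s ^ 2 = a / (D * s) := by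
      rw [eq_div_iff (by positivity)]
      field_simp
      linear_combination (D - a) * hs2 + D * hDa
    rw [hval] at hPhi
    have hPsiEq : Psi t = fun w : ℝ => (Phi t w - w) / t := by
      funext w; simp [Psi, h0.ne']
    have hPsi : HasDerivAt (Psi t) ((a / (D * s) - 1) / t) z := by
      rw [hPsiEq]
      exact (hPhi.sub (hasDerivAt_id z)).div_const t
    rw [hPsi.deriv]
    -- bound a / (D * s) ≤ exp t
    have hss : Real.sqrt a ≤ s := Real.sqrt_le_sqrt hDge
    have hsa : Real.sqrt a = Real.exp (-t) := by
      have haa : a = Real.exp (-t) * Real.exp (-t) := by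
        rw [ha, ← Real.exp_add]; ring_nf
      rw [haa, Real.sqrt_mul_self (Real.exp_pos _).le]
    have hbound : a / (D * s) ≤ Real.exp t := by
      have h1 : a * Real.sqrt a ≤ D * s := by
        apply mul_le_mul hDge hss (Real.sqrt_nonneg a) hDpos.le
      have h2 : a / (D * s) ≤ a / (a * Real.sqrt a) := by
        apply div_le_div_of_nonneg_left ha0.le (by positivity) h1
      have h3 : a / (a * Real.sqrt a) = Real.exp t := by
        rw [hsa, ha]
        rw [div_eq_iff (by positivity)]
        rw [← Real.exp_add, ← Real.exp_add]
        ring_nf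
      linarith
    -- (exp t - 1)/t ≤ exp Δt₀
    have hexp : Real.exp t - 1 ≤ t * Real.exp t := by
      have h2 : (1 - t) * Real.exp t ≤ Real.exp (-t) * Real.exp t :=
        mul_le_mul_of_nonneg_right (by linarith [Real.add_one_le_exp (-t)])
          (Real.exp_pos t).le
      have h3 : Real.exp (-t) * Real.exp t = 1 := by rw [← Real.exp_add]; simp
      nlinarith
    have hmono : Real.exp t ≤ Real.exp Δt₀ := Real.exp_le_exp.mpr htΔ
    rw [div_le_iff₀ h0]
    nlinarith [Real.exp_pos t]

end
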